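/- Let F be a field, let n ≥ 2, and fix k with 2 ≤ k ≤ n. For each pair 1 ≤ r < s ≤ n with s + k − 2 ≤ n, the matrix N_{r,s,k} ∈ M_n(F) is similar (conjugate by an invertible matrix) to the matrix N = ∑_{i=1}^{k−1} E_{i+1,i} ∈ M_n(F), i.e., to the matrix consisting of a single nilpotent Jordan block of size k together with n − k zero blocks of size 1. -/
import Mathlib

/-- `Eunit F n a b` is the `n × n` matrix unit `E_{a,b}` over `F`, in **1-based**
indexing: it has a `1` in row `a`, column `b` (`1 ≤ a, b ≤ n`) and `0` elsewhere. -/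
def Eunit (F : Type*) [Field F] (n a b : ℕ) : Matrix (Fin n) (Fin n) F :=
  Matrix.of fun i j => if (i : ℕ) + 1 = a ∧ (j : ℕ) + 1 = b then 1 else 0

/-- The matrix `N_{r,s,k} = E_{r,r} + E_{s,r} - E_{r,s+k-2} - ∑_{i=0}^{k-2} E_{s,s+i}
+ ∑_{i=0}^{k-3} E_{s+i+1,s+i} ∈ Mₙ(F)`, in 1-based indexing. -/
def Nrsk (F : Type*) [Field F] (n r s k : ℕ) : Matrix (Fin n) (Fin n) F :=
  Eunit F n r r + Eunit F n s r - Eunit F n r (s + k - 2)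
    - ∑ i ∈ Finset.range (k - 1), Eunit F n s (s + i)
    + ∑ i ∈ Finset.range (k - 2), Eunit F n (s + i + 1) (s + i)

/-- The matrix `N = ∑_{i=1}^{k-1} E_{i+1,i} ∈ Mₙ(F)` consisting of a single nilpotent
Jordan block of size `k` together with `n - k` zero blocks of size `1`. -/
def singleJordanBlock (F : Type*) [Field F] (n k : ℕ) : Matrix (Fin n) (Fin n) F :=
  ∑ i ∈ Finset.range (k - 1), Eunit F n (i + 2) (i + 1)


namespace NrskSim

/-- The column-to-row relabelling: `1 ↦ r`, `b ↦ s+b-2` for `2 ≤ b ≤ k`, and the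
remaining indices are mapped in order onto the complement of `{r, s, …, s+k-2}`. -/
def fidx (r s k b : ℕ) : ℕ :=
  if b = 1 then r
  else if b ≤ k then s + b - 2
  else if b ≤ k + r - 1 then b - k
  else if b ≤ k + s - 2 then b - k + 1
  else b

/-- The inverse of `fidx`. -/
def gidx (r s k a : ℕ) : ℕ :=
  if a = r then 1
  else if s ≤ a ∧ a ≤ s + k - 2 then a - s + 2
  else if a < r then a + k
  else if a < s then a + k - 1
  else a

/-- Bundle of the numerical hypotheses. -/
structure Hyp (n r s k : ℕ) : Prop where
  hr : 1 ≤ r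
  hrs : r < s
  hsn : s ≤ n
  hk : 2 ≤ k
  hkn : k ≤ n
  hskn : s + k - 2 ≤ n

variable {n r s k : ℕ}

theorem gf (H : Hyp n r s k) {b : ℕ} (h1 : 1 ≤ b) (h2 : b ≤ n) :
    gidx r s k (fidx r s k b) = b := by
  obtain ⟨hr, hrs, hsn, hk, hkn, hskn⟩ := H
  unfold fidx gidx; split_ifs <;> omega

theorem fg (H : Hyp n r s k) {a : ℕ} (h1 : 1 ≤ a) (h2 : a ≤ n) :
    fidx r s k (gidx r s k a) = a := by
  obtain ⟨hr, hrs, hsn, hk, hkn, hskn⟩ := H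
  unfold fidx gidx; split_ifs <;> omega

theorem fmem (H : Hyp n r s k) {b : ℕ} (h1 : 1 ≤ b) (h2 : b ≤ n) :
    1 ≤ fidx r s k b ∧ fidx r s k b ≤ n := by
  obtain ⟨hr, hrs, hsn, hk, hkn, hskn⟩ := H
  unfold fidx; split_ifs <;> omega

theorem gmem (H : Hyp n r s k) {a : ℕ} (h1 : 1 ≤ a) (h2 : a ≤ n) :
    1 ≤ gidx r s k a ∧ gidx r s k a ≤ n := by
  obtain ⟨hr, hrs, hsn, hk, hkn, hskn⟩ := H
  unfold gidx; split_ifs <;> omega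

theorem f_one (H : Hyp n r s k) : fidx r s k 1 = r := by
  unfold fidx; simp

theorem f_mid (H : Hyp n r s k) {b : ℕ} (h1 : 2 ≤ b) (h2 : b ≤ k) :
    fidx r s k b = s + b - 2 := by
  obtain ⟨hr, hrs, hsn, hk, hkn, hskn⟩ := H
  unfold fidx; split_ifs <;> omega

theorem f_eq_r (H : Hyp n r s k) {b : ℕ} (h1 : 1 ≤ b) (h2 : b ≤ n) :
    fidx r s k b = r ↔ b = 1 := by
  obtain ⟨hr, hrs, hsn, hk, hkn, hskn⟩ := H
  unfold fidx; split_ifs <;> omega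

theorem f_range (H : Hyp n r s k) {b : ℕ} (h1 : 1 ≤ b) (h2 : b ≤ n) :
    (s ≤ fidx r s k b ∧ fidx r s k b ≤ s + k - 2) ↔ (2 ≤ b ∧ b ≤ k) := by
  obtain ⟨hr, hrs, hsn, hk, hkn, hskn⟩ := H
  unfold fidx; split_ifs <;> omega

theorem f_eq_top (H : Hyp n r s k) {b : ℕ} (h1 : 1 ≤ b) (h2 : b ≤ n) :
    fidx r s k b = s + k - 2 ↔ b = k := by
  obtain ⟨hr, hrs, hsn, hk, hkn, hskn⟩ := H
  unfold fidx; split_ifs <;> omega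


theorem sum_pin {M : Type*} [AddCommMonoid M] (n t : ℕ) (G : ℕ → M) (h1 : 1 ≤ t) (h2 : t ≤ n)
    (h0 : ∀ c, 1 ≤ c → c ≤ n → c ≠ t → G c = 0) : ∑ c ∈ Finset.Icc 1 n, G c = G t :=
  Finset.sum_eq_single_of_mem t (Finset.mem_Icc.mpr ⟨h1, h2⟩) fun c hc hne =>
    h0 c (Finset.mem_Icc.mp hc).1 (Finset.mem_Icc.mp hc).2 hne

theorem fin_sum_icc {M : Type*} [AddCommMonoid M] (n : ℕ) (G : ℕ → M) :
    ∑ c : Fin n, G ((c : ℕ) + 1) = ∑ c ∈ Finset.Icc 1 n, G c := by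
  rw [show Finset.Icc 1 n = Finset.Ico 1 (n + 1) by rfl, Finset.sum_Ico_eq_sum_range]
  rw [Fin.sum_univ_eq_sum_range (fun i => G (i + 1)) n]
  simp only [Nat.add_sub_cancel]
  exact Finset.sum_congr rfl fun c _ => by rw [add_comm]

theorem sum_range_pin {F : Type*} [Field F] (m : ℕ) (P : ℕ → Prop) [DecidablePred P] (t : ℕ)
    (h : ∀ i, P i → i = t) :
    ∑ i ∈ Finset.range m, (if P i then (1 : F) else 0) = if t < m ∧ P t then 1 else 0 := by
  by_cases hm : t < m ∧ P t
  · rw [if_pos hm, Finset.sum_eq_single_of_mem t (Finset.mem_range.mpr hm.1), if_pos hm.2]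
    intro c _ hne
    exact if_neg fun hP => hne (h c hP)
  · rw [if_neg hm]
    apply Finset.sum_eq_zero
    intro c hc
    refine if_neg fun hP => ?_
    have := h c hP
    subst this
    exact hm ⟨Finset.mem_range.mp hc, hP⟩

/-- Master lemma: a sum of a product of two indicators over `Icc 1 n`, where the pair of
conditions pins the index to `t` and is (globally) equivalent to `Cond`. -/
theorem sum_prod_ite {F : Type*} [Field F] (n : ℕ) (P Q : ℕ → Prop) [DecidablePred P]
    [DecidablePred Q] (Cond : Prop) [Decidable Cond] (t : ℕ)
    (h1 : Cond → (1 ≤ t ∧ t ≤ n) ∧ P t ∧ Q t)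
    (h2 : ∀ c, 1 ≤ c → c ≤ n → P c → Q c → c = t ∧ Cond) :
    ∑ c ∈ Finset.Icc 1 n, (if P c then (1 : F) else 0) * (if Q c then (1 : F) else 0) =
      if Cond then 1 else 0 := by
  by_cases hC : Cond
  · obtain ⟨⟨ht1, ht2⟩, hP, hQ⟩ := h1 hC
    rw [if_pos hC, sum_pin n t _ ht1 ht2 ?_]
    · rw [if_pos hP, if_pos hQ, one_mul]
    · intro c hc1 hc2 hne
      by_cases hP' : P c
      · by_cases hQ' : Q c
        · exact absurd (h2 c hc1 hc2 hP' hQ').1 hne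
        · rw [if_neg hQ', mul_zero]
      · rw [if_neg hP', zero_mul]
  · rw [if_neg hC]
    apply Finset.sum_eq_zero
    intro c hc
    obtain ⟨hc1, hc2⟩ := Finset.mem_Icc.mp hc
    by_cases hP' : P c
    · by_cases hQ' : Q c
      · exact absurd (h2 c hc1 hc2 hP' hQ').2 hC
      · rw [if_neg hQ', mul_zero]
    · rw [if_neg hP', zero_mul]



variable (F : Type*) [Field F]

/-- Entries of the change-of-basis matrix `Q` (columns: the Jordan chain
`e_r, e_r + e_s, …, e_r + e_{s+k-2}` followed by the remaining standard basis vectors). -/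
def qent (r s k a b : ℕ) : F :=
  (if a = fidx r s k b then 1 else 0) + (if 2 ≤ b ∧ b ≤ k ∧ a = r then 1 else 0)

/-- Entries of the inverse of `Q`. -/
def rent (r s k a b : ℕ) : F :=
  (if fidx r s k a = b then 1 else 0) - (if a = 1 ∧ s ≤ b ∧ b ≤ s + k - 2 then 1 else 0)

/-- Closed form for the entries of `Nrsk`. -/
def nent (r s k a b : ℕ) : F :=
  (if a = r ∧ b = r then 1 else 0) + (if a = s ∧ b = r then 1 else 0)
    - (if a = r ∧ b = s + k - 2 then 1 else 0)
    - (if a = s ∧ s ≤ b ∧ b ≤ s + k - 2 then 1 else 0)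
    + (if s ≤ b ∧ b + 1 ≤ s + k - 2 ∧ a = b + 1 then 1 else 0)

/-- Closed form for the entries of `singleJordanBlock`. -/
def jent (k a b : ℕ) : F := if a = b + 1 ∧ b + 1 ≤ k then 1 else 0

/-- The common closed form for the entries of `Nrsk * Q` and `Q * J`. -/
def eent (r s k a b : ℕ) : F :=
  (if b + 1 ≤ k ∧ a = s + b - 1 then 1 else 0) + (if b + 1 ≤ k ∧ a = r then 1 else 0)

theorem mulQR (H : Hyp n r s k) {a b : ℕ} (ha1 : 1 ≤ a) (ha2 : a ≤ n) (hb1 : 1 ≤ b)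
    (hb2 : b ≤ n) :
    ∑ c ∈ Finset.Icc 1 n, qent F r s k a c * rent F r s k c b = if a = b then 1 else 0 := by
  have expand : ∀ c, qent F r s k a c * rent F r s k c b =
      ((if a = fidx r s k c then (1 : F) else 0) * (if fidx r s k c = b then (1 : F) else 0)
        + (if 2 ≤ c ∧ c ≤ k ∧ a = r then (1 : F) else 0) *
            (if fidx r s k c = b then (1 : F) else 0))
      - ((if a = fidx r s k c then (1 : F) else 0) *
            (if c = 1 ∧ s ≤ b ∧ b ≤ s + k - 2 then (1 : F) else 0)
        + (if 2 ≤ c ∧ c ≤ k ∧ a = r then (1 : F) else 0) *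
            (if c = 1 ∧ s ≤ b ∧ b ≤ s + k - 2 then (1 : F) else 0)) := by
    intro c; unfold qent rent; ring
  obtain ⟨hr, hrs, hsn, hk, hkn, hskn⟩ := H
  have H : Hyp n r s k := ⟨hr, hrs, hsn, hk, hkn, hskn⟩
  rw [Finset.sum_congr rfl fun c _ => expand c, Finset.sum_sub_distrib,
    Finset.sum_add_distrib, Finset.sum_add_distrib]
  rw [sum_prod_ite n (fun c => a = fidx r s k c) (fun c => fidx r s k c = b)
    (a = b) (gidx r s k a)
    (fun hC => by
      refine ⟨⟨(gmem H ha1 ha2).1, (gmem H ha1 ha2).2⟩, ?_, ?_⟩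
      · show a = fidx r s k (gidx r s k a)
        rw [fg H ha1 ha2]
      · show fidx r s k (gidx r s k a) = b
        rw [fg H ha1 ha2, hC])
    (fun c hc1 hc2 hP hQ => by
      have hP' : a = fidx r s k c := hP
      have hQ' : fidx r s k c = b := hQ
      constructor
      · rw [← gf H hc1 hc2, ← hP']
      · exact hP'.trans hQ')]
  rw [sum_prod_ite n (fun c => 2 ≤ c ∧ c ≤ k ∧ a = r) (fun c => fidx r s k c = b)
    (a = r ∧ s ≤ b ∧ b ≤ s + k - 2) (b - s + 2)
    (fun hC => by
      obtain ⟨har, hsb, hbk⟩ := hC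
      refine ⟨⟨by omega, by omega⟩, ⟨by omega, by omega, har⟩, ?_⟩
      show fidx r s k (b - s + 2) = b
      rw [f_mid H (by omega) (by omega)]; omega)
    (fun c hc1 hc2 hP hQ => by
      have hP' : 2 ≤ c ∧ c ≤ k ∧ a = r := hP
      have hQ' : fidx r s k c = b := hQ
      obtain ⟨h2c, hck, har⟩ := hP'
      rw [f_mid H h2c hck] at hQ'
      exact ⟨by omega, har, by omega, by omega⟩)]
  rw [sum_prod_ite n (fun c => a = fidx r s k c)
    (fun c => c = 1 ∧ s ≤ b ∧ b ≤ s + k - 2)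
    (a = r ∧ s ≤ b ∧ b ≤ s + k - 2) 1
    (fun hC => by
      refine ⟨⟨by omega, by omega⟩, ?_, ⟨rfl, hC.2.1, hC.2.2⟩⟩
      show a = fidx r s k 1
      rw [f_one H]; exact hC.1)
    (fun c hc1 hc2 hP hQ => by
      have hP' : a = fidx r s k c := hP
      have hQ' : c = 1 ∧ s ≤ b ∧ b ≤ s + k - 2 := hQ
      obtain ⟨hc, hsb, hbk⟩ := hQ'
      subst hc
      rw [f_one H] at hP'
      exact ⟨rfl, hP', hsb, hbk⟩)]
  rw [sum_prod_ite n (fun c => 2 ≤ c ∧ c ≤ k ∧ a = r)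
    (fun c => c = 1 ∧ s ≤ b ∧ b ≤ s + k - 2) False 1
    (fun hC => absurd hC not_false)
    (fun c hc1 hc2 hP hQ => by
      have hP' : 2 ≤ c ∧ c ≤ k ∧ a = r := hP
      have hQ' : c = 1 ∧ s ≤ b ∧ b ≤ s + k - 2 := hQ
      exact absurd rfl (show ¬(c = c) from by omega))]
  simp only [if_neg not_false]
  ring

theorem mulRQ (H : Hyp n r s k) {a b : ℕ} (ha1 : 1 ≤ a) (ha2 : a ≤ n) (hb1 : 1 ≤ b)
    (hb2 : b ≤ n) :
    ∑ c ∈ Finset.Icc 1 n, rent F r s k a c * qent F r s k c b = if a = b then 1 else 0 := by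
  have expand : ∀ c, rent F r s k a c * qent F r s k c b =
      ((if fidx r s k a = c then (1 : F) else 0) * (if c = fidx r s k b then (1 : F) else 0)
        + (if fidx r s k a = c then (1 : F) else 0) *
            (if 2 ≤ b ∧ b ≤ k ∧ c = r then (1 : F) else 0))
      - ((if a = 1 ∧ s ≤ c ∧ c ≤ s + k - 2 then (1 : F) else 0) *
            (if c = fidx r s k b then (1 : F) else 0)
        + (if a = 1 ∧ s ≤ c ∧ c ≤ s + k - 2 then (1 : F) else 0) *
            (if 2 ≤ b ∧ b ≤ k ∧ c = r then (1 : F) else 0)) := by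
    intro c; unfold qent rent; ring
  obtain ⟨hr, hrs, hsn, hk, hkn, hskn⟩ := H
  have H : Hyp n r s k := ⟨hr, hrs, hsn, hk, hkn, hskn⟩
  rw [Finset.sum_congr rfl fun c _ => expand c, Finset.sum_sub_distrib,
    Finset.sum_add_distrib, Finset.sum_add_distrib]
  rw [sum_prod_ite n (fun c => fidx r s k a = c) (fun c => c = fidx r s k b)
    (a = b) (fidx r s k a)
    (fun hC => by
      refine ⟨⟨(fmem H ha1 ha2).1, (fmem H ha1 ha2).2⟩, rfl, ?_⟩
      show fidx r s k a = fidx r s k b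
      rw [hC])
    (fun c hc1 hc2 hP hQ => by
      have hP' : fidx r s k a = c := hP
      have hQ' : c = fidx r s k b := hQ
      subst hQ'
      have hab : a = b := by rw [← gf H ha1 ha2, hP', gf H hb1 hb2]
      exact ⟨hP'.symm, hab⟩)]
  rw [sum_prod_ite n (fun c => fidx r s k a = c) (fun c => 2 ≤ b ∧ b ≤ k ∧ c = r)
    (a = 1 ∧ 2 ≤ b ∧ b ≤ k) r
    (fun hC => by
      obtain ⟨ha, h2b, hbk⟩ := hC
      subst ha
      exact ⟨⟨by omega, by omega⟩, f_one H, h2b, hbk, rfl⟩)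
    (fun c hc1 hc2 hP hQ => by
      have hP' : fidx r s k a = c := hP
      have hQ' : 2 ≤ b ∧ b ≤ k ∧ c = r := hQ
      obtain ⟨h2b, hbk, hcr⟩ := hQ'
      subst hcr
      have := (f_eq_r H ha1 ha2).mp hP'
      exact ⟨rfl, this, h2b, hbk⟩)]
  rw [sum_prod_ite n (fun c => a = 1 ∧ s ≤ c ∧ c ≤ s + k - 2) (fun c => c = fidx r s k b)
    (a = 1 ∧ 2 ≤ b ∧ b ≤ k) (fidx r s k b)
    (fun hC => by
      obtain ⟨ha, h2b, hbk⟩ := hC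
      exact ⟨⟨(fmem H hb1 hb2).1, (fmem H hb1 hb2).2⟩,
        ⟨ha, (f_range H hb1 hb2).mpr ⟨h2b, hbk⟩⟩, rfl⟩)
    (fun c hc1 hc2 hP hQ => by
      have hP' : a = 1 ∧ s ≤ c ∧ c ≤ s + k - 2 := hP
      have hQ' : c = fidx r s k b := hQ
      subst hQ'
      exact ⟨rfl, hP'.1, (f_range H hb1 hb2).mp hP'.2⟩)]
  rw [sum_prod_ite n (fun c => a = 1 ∧ s ≤ c ∧ c ≤ s + k - 2)
    (fun c => 2 ≤ b ∧ b ≤ k ∧ c = r) False 1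
    (fun hC => absurd hC not_false)
    (fun c hc1 hc2 hP hQ => by
      have hP' : a = 1 ∧ s ≤ c ∧ c ≤ s + k - 2 := hP
      have hQ' : 2 ≤ b ∧ b ≤ k ∧ c = r := hQ
      exact absurd rfl (show ¬(c = c) from by omega))]
  simp only [if_neg not_false]
  ring

set_option maxHeartbeats 2000000 in
theorem mulNQ (H : Hyp n r s k) {a b : ℕ} (ha1 : 1 ≤ a) (ha2 : a ≤ n) (hb1 : 1 ≤ b)
    (hb2 : b ≤ n) :
    ∑ c ∈ Finset.Icc 1 n, nent F r s k a c * qent F r s k c b = eent F r s k a b := by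
  have expand : ∀ c, nent F r s k a c * qent F r s k c b =
      (((((if a = r ∧ c = r then (1 : F) else 0) * (if c = fidx r s k b then (1 : F) else 0)
        + (if a = s ∧ c = r then (1 : F) else 0) * (if c = fidx r s k b then (1 : F) else 0))
        - (if a = r ∧ c = s + k - 2 then (1 : F) else 0) *
            (if c = fidx r s k b then (1 : F) else 0))
        - (if a = s ∧ s ≤ c ∧ c ≤ s + k - 2 then (1 : F) else 0) *
            (if c = fidx r s k b then (1 : F) else 0))
        + (if s ≤ c ∧ c + 1 ≤ s + k - 2 ∧ a = c + 1 then (1 : F) else 0) *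
            (if c = fidx r s k b then (1 : F) else 0))
      + (((((if a = r ∧ c = r then (1 : F) else 0) *
              (if 2 ≤ b ∧ b ≤ k ∧ c = r then (1 : F) else 0)
        + (if a = s ∧ c = r then (1 : F) else 0) *
            (if 2 ≤ b ∧ b ≤ k ∧ c = r then (1 : F) else 0))
        - (if a = r ∧ c = s + k - 2 then (1 : F) else 0) *
            (if 2 ≤ b ∧ b ≤ k ∧ c = r then (1 : F) else 0))
        - (if a = s ∧ s ≤ c ∧ c ≤ s + k - 2 then (1 : F) else 0) *
            (if 2 ≤ b ∧ b ≤ k ∧ c = r then (1 : F) else 0))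
        + (if s ≤ c ∧ c + 1 ≤ s + k - 2 ∧ a = c + 1 then (1 : F) else 0) *
            (if 2 ≤ b ∧ b ≤ k ∧ c = r then (1 : F) else 0)) := by
    intro c; unfold nent qent; ring
  obtain ⟨hr, hrs, hsn, hk, hkn, hskn⟩ := H
  have H : Hyp n r s k := ⟨hr, hrs, hsn, hk, hkn, hskn⟩
  rw [Finset.sum_congr rfl fun c _ => expand c, Finset.sum_add_distrib,
    Finset.sum_add_distrib, Finset.sum_add_distrib, Finset.sum_sub_distrib,
    Finset.sum_sub_distrib, Finset.sum_sub_distrib, Finset.sum_sub_distrib,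
    Finset.sum_add_distrib, Finset.sum_add_distrib]
  -- U11
  rw [sum_prod_ite n (fun c => a = r ∧ c = r) (fun c => c = fidx r s k b)
    (a = r ∧ b = 1) r
    (fun hC => by
      refine ⟨⟨by omega, by omega⟩, ⟨hC.1, rfl⟩, ?_⟩
      show r = fidx r s k b
      rw [hC.2, f_one H])
    (fun c hc1 hc2 hP hQ => by
      have hP' : a = r ∧ c = r := hP
      have hQ' : c = fidx r s k b := hQ
      obtain ⟨har, hcr⟩ := hP'
      subst hcr
      exact ⟨rfl, har, (f_eq_r H hb1 hb2).mp hQ'.symm⟩)]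
  -- U21
  rw [sum_prod_ite n (fun c => a = s ∧ c = r) (fun c => c = fidx r s k b)
    (a = s ∧ b = 1) r
    (fun hC => by
      refine ⟨⟨by omega, by omega⟩, ⟨hC.1, rfl⟩, ?_⟩
      show r = fidx r s k b
      rw [hC.2, f_one H])
    (fun c hc1 hc2 hP hQ => by
      have hP' : a = s ∧ c = r := hP
      have hQ' : c = fidx r s k b := hQ
      obtain ⟨har, hcr⟩ := hP'
      subst hcr
      exact ⟨rfl, har, (f_eq_r H hb1 hb2).mp hQ'.symm⟩)]
  -- U31
  rw [sum_prod_ite n (fun c => a = r ∧ c = s + k - 2) (fun c => c = fidx r s k b)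
    (a = r ∧ b = k) (s + k - 2)
    (fun hC => by
      refine ⟨⟨by omega, by omega⟩, ⟨hC.1, rfl⟩, ?_⟩
      show s + k - 2 = fidx r s k b
      rw [hC.2, f_mid H hk (le_refl k)])
    (fun c hc1 hc2 hP hQ => by
      have hP' : a = r ∧ c = s + k - 2 := hP
      have hQ' : c = fidx r s k b := hQ
      obtain ⟨har, hc⟩ := hP'
      subst hc
      exact ⟨rfl, har, (f_eq_top H hb1 hb2).mp hQ'.symm⟩)]
  -- U41
  rw [sum_prod_ite n (fun c => a = s ∧ s ≤ c ∧ c ≤ s + k - 2) (fun c => c = fidx r s k b)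
    (a = s ∧ 2 ≤ b ∧ b ≤ k) (fidx r s k b)
    (fun hC => by
      obtain ⟨has, h2b, hbk⟩ := hC
      exact ⟨⟨(fmem H hb1 hb2).1, (fmem H hb1 hb2).2⟩,
        ⟨has, (f_range H hb1 hb2).mpr ⟨h2b, hbk⟩⟩, rfl⟩)
    (fun c hc1 hc2 hP hQ => by
      have hP' : a = s ∧ s ≤ c ∧ c ≤ s + k - 2 := hP
      have hQ' : c = fidx r s k b := hQ
      subst hQ'
      exact ⟨rfl, hP'.1, (f_range H hb1 hb2).mp hP'.2⟩)]
  -- U51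
  rw [sum_prod_ite n (fun c => s ≤ c ∧ c + 1 ≤ s + k - 2 ∧ a = c + 1)
    (fun c => c = fidx r s k b)
    (s + 1 ≤ a ∧ a ≤ s + k - 2 ∧ b = a - s + 1) (a - 1)
    (fun hC => by
      obtain ⟨hsa, hask, hb⟩ := hC
      refine ⟨⟨by omega, by omega⟩, ⟨by omega, by omega, by omega⟩, ?_⟩
      show a - 1 = fidx r s k b
      rw [hb, f_mid H (by omega) (by omega)]; omega)
    (fun c hc1 hc2 hP hQ => by
      have hP' : s ≤ c ∧ c + 1 ≤ s + k - 2 ∧ a = c + 1 := hP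
      have hQ' : c = fidx r s k b := hQ
      obtain ⟨hsc, hck, hac⟩ := hP'
      have hrange : 2 ≤ b ∧ b ≤ k := (f_range H hb1 hb2).mp (by omega)
      rw [f_mid H hrange.1 hrange.2] at hQ'
      exact ⟨by omega, by omega, by omega, by omega⟩)]
  -- U12
  rw [sum_prod_ite n (fun c => a = r ∧ c = r) (fun c => 2 ≤ b ∧ b ≤ k ∧ c = r)
    (a = r ∧ 2 ≤ b ∧ b ≤ k) r
    (fun hC => ⟨⟨by omega, by omega⟩, ⟨hC.1, rfl⟩, hC.2.1, hC.2.2, rfl⟩)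
    (fun c hc1 hc2 hP hQ => by
      have hP' : a = r ∧ c = r := hP
      have hQ' : 2 ≤ b ∧ b ≤ k ∧ c = r := hQ
      exact ⟨hP'.2, hP'.1, hQ'.1, hQ'.2.1⟩)]
  -- U22
  rw [sum_prod_ite n (fun c => a = s ∧ c = r) (fun c => 2 ≤ b ∧ b ≤ k ∧ c = r)
    (a = s ∧ 2 ≤ b ∧ b ≤ k) r
    (fun hC => ⟨⟨by omega, by omega⟩, ⟨hC.1, rfl⟩, hC.2.1, hC.2.2, rfl⟩)
    (fun c hc1 hc2 hP hQ => by
      have hP' : a = s ∧ c = r := hP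
      have hQ' : 2 ≤ b ∧ b ≤ k ∧ c = r := hQ
      exact ⟨hP'.2, hP'.1, hQ'.1, hQ'.2.1⟩)]
  -- U32
  rw [sum_prod_ite n (fun c => a = r ∧ c = s + k - 2) (fun c => 2 ≤ b ∧ b ≤ k ∧ c = r)
    False 1
    (fun hC => absurd hC not_false)
    (fun c hc1 hc2 hP hQ => by
      have hP' : a = r ∧ c = s + k - 2 := hP
      have hQ' : 2 ≤ b ∧ b ≤ k ∧ c = r := hQ
      have h1 := hP'.2
      have h2 := hQ'.2.2
      exact absurd rfl (show ¬(c = c) from by omega))]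
  -- U42
  rw [sum_prod_ite n (fun c => a = s ∧ s ≤ c ∧ c ≤ s + k - 2)
    (fun c => 2 ≤ b ∧ b ≤ k ∧ c = r) False 1
    (fun hC => absurd hC not_false)
    (fun c hc1 hc2 hP hQ => by
      have hP' : a = s ∧ s ≤ c ∧ c ≤ s + k - 2 := hP
      have hQ' : 2 ≤ b ∧ b ≤ k ∧ c = r := hQ
      have h1 := hP'.2.1
      have h2 := hQ'.2.2
      exact absurd rfl (show ¬(c = c) from by omega))]
  -- U52
  rw [sum_prod_ite n (fun c => s ≤ c ∧ c + 1 ≤ s + k - 2 ∧ a = c + 1)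
    (fun c => 2 ≤ b ∧ b ≤ k ∧ c = r) False 1
    (fun hC => absurd hC not_false)
    (fun c hc1 hc2 hP hQ => by
      have hP' : s ≤ c ∧ c + 1 ≤ s + k - 2 ∧ a = c + 1 := hP
      have hQ' : 2 ≤ b ∧ b ≤ k ∧ c = r := hQ
      have h1 := hP'.1
      have h2 := hQ'.2.2
      exact absurd rfl (show ¬(c = c) from by omega))]
  simp only [if_neg not_false]
  unfold eent
  split_ifs <;> first | (exfalso; omega) | norm_num

theorem mulQJ (H : Hyp n r s k) {a b : ℕ} (ha1 : 1 ≤ a) (ha2 : a ≤ n) (hb1 : 1 ≤ b)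
    (hb2 : b ≤ n) :
    ∑ c ∈ Finset.Icc 1 n, qent F r s k a c * jent F k c b = eent F r s k a b := by
  have expand : ∀ c, qent F r s k a c * jent F k c b =
      (if a = fidx r s k c then (1 : F) else 0) * (if c = b + 1 ∧ b + 1 ≤ k then (1 : F) else 0)
      + (if 2 ≤ c ∧ c ≤ k ∧ a = r then (1 : F) else 0) *
          (if c = b + 1 ∧ b + 1 ≤ k then (1 : F) else 0) := by
    intro c; unfold qent jent; ring
  obtain ⟨hr, hrs, hsn, hk, hkn, hskn⟩ := H
  have H : Hyp n r s k := ⟨hr, hrs, hsn, hk, hkn, hskn⟩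
  rw [Finset.sum_congr rfl fun c _ => expand c, Finset.sum_add_distrib]
  rw [sum_prod_ite n (fun c => a = fidx r s k c) (fun c => c = b + 1 ∧ b + 1 ≤ k)
    (b + 1 ≤ k ∧ a = s + b - 1) (b + 1)
    (fun hC => by
      refine ⟨⟨by omega, by omega⟩, ?_, rfl, hC.1⟩
      show a = fidx r s k (b + 1)
      rw [f_mid H (by omega) hC.1]
      omega)
    (fun c hc1 hc2 hP hQ => by
      have hP' : a = fidx r s k c := hP
      have hQ' : c = b + 1 ∧ b + 1 ≤ k := hQ
      obtain ⟨hc, hbk⟩ := hQ'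
      subst hc
      rw [f_mid H (by omega) hbk] at hP'
      exact ⟨rfl, hbk, by omega⟩)]
  rw [sum_prod_ite n (fun c => 2 ≤ c ∧ c ≤ k ∧ a = r) (fun c => c = b + 1 ∧ b + 1 ≤ k)
    (b + 1 ≤ k ∧ a = r) (b + 1)
    (fun hC => ⟨⟨by omega, by omega⟩, ⟨by omega, hC.1, hC.2⟩, rfl, hC.1⟩)
    (fun c hc1 hc2 hP hQ => by
      have hP' : 2 ≤ c ∧ c ≤ k ∧ a = r := hP
      have hQ' : c = b + 1 ∧ b + 1 ≤ k := hQ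
      exact ⟨hQ'.1, hQ'.2, hP'.2.2⟩)]
  rfl

/-- The change-of-basis matrix. -/
def Qmat (n r s k : ℕ) : Matrix (Fin n) (Fin n) F :=
  Matrix.of fun i j => qent F r s k ((i : ℕ) + 1) ((j : ℕ) + 1)

/-- Its inverse. -/
def Rmat (n r s k : ℕ) : Matrix (Fin n) (Fin n) F :=
  Matrix.of fun i j => rent F r s k ((i : ℕ) + 1) ((j : ℕ) + 1)

theorem ite_one_zero_congr {p q : Prop} [Decidable p] [Decidable q] (h : p ↔ q) :
    (if p then (1 : F) else 0) = if q then 1 else 0 := by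
  simp [h]

theorem Nrsk_apply (H : Hyp n r s k) (i j : Fin n) :
    Nrsk F n r s k i j = nent F r s k ((i : ℕ) + 1) ((j : ℕ) + 1) := by
  obtain ⟨hr, hrs, hsn, hk, hkn, hskn⟩ := H
  unfold Nrsk Eunit nent
  simp only [Matrix.add_apply, Matrix.sub_apply, Matrix.sum_apply, Matrix.of_apply]
  rw [sum_range_pin (k - 1) (fun x => (i : ℕ) + 1 = s ∧ (j : ℕ) + 1 = s + x)
    ((j : ℕ) + 1 - s) (fun x hx => by omega)]
  rw [sum_range_pin (k - 2) (fun x => (i : ℕ) + 1 = s + x + 1 ∧ (j : ℕ) + 1 = s + x)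
    ((j : ℕ) + 1 - s) (fun x hx => by omega)]
  congr 1
  · congr 1
    exact ite_one_zero_congr F (by omega)
  · exact ite_one_zero_congr F (by omega)

theorem J_apply (H : Hyp n r s k) (i j : Fin n) :
    singleJordanBlock F n k i j = jent F k ((i : ℕ) + 1) ((j : ℕ) + 1) := by
  obtain ⟨hr, hrs, hsn, hk, hkn, hskn⟩ := H
  unfold singleJordanBlock Eunit jent
  simp only [Matrix.sum_apply, Matrix.of_apply]
  rw [sum_range_pin (k - 1) (fun x => (i : ℕ) + 1 = x + 2 ∧ (j : ℕ) + 1 = x + 1)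
    (j : ℕ) (fun x hx => by omega)]
  exact ite_one_zero_congr F (by omega)

theorem QR_one (H : Hyp n r s k) : Qmat F n r s k * Rmat F n r s k = 1 := by
  ext i j
  rw [Matrix.mul_apply]
  simp only [Qmat, Rmat, Matrix.of_apply]
  rw [fin_sum_icc n (fun c => qent F r s k ((i : ℕ) + 1) c * rent F r s k c ((j : ℕ) + 1))]
  rw [mulQR F H (by omega) (by omega) (by omega) (by omega)]
  rw [Matrix.one_apply]
  exact ite_one_zero_congr F (by rw [Fin.ext_iff]; omega)

theorem RQ_one (H : Hyp n r s k) : Rmat F n r s k * Qmat F n r s k = 1 := by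
  ext i j
  rw [Matrix.mul_apply]
  simp only [Qmat, Rmat, Matrix.of_apply]
  rw [fin_sum_icc n (fun c => rent F r s k ((i : ℕ) + 1) c * qent F r s k c ((j : ℕ) + 1))]
  rw [mulRQ F H (by omega) (by omega) (by omega) (by omega)]
  rw [Matrix.one_apply]
  exact ite_one_zero_congr F (by rw [Fin.ext_iff]; omega)

theorem NQ_eq_QJ (H : Hyp n r s k) :
    Nrsk F n r s k * Qmat F n r s k = Qmat F n r s k * singleJordanBlock F n k := by
  ext i j
  rw [Matrix.mul_apply, Matrix.mul_apply]
  simp only [Qmat, Matrix.of_apply, Nrsk_apply F H, J_apply F H]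
  rw [fin_sum_icc n (fun c => nent F r s k ((i : ℕ) + 1) c * qent F r s k c ((j : ℕ) + 1))]
  rw [fin_sum_icc n (fun c => qent F r s k ((i : ℕ) + 1) c * jent F k c ((j : ℕ) + 1))]
  rw [mulNQ F H (by omega) (by omega) (by omega) (by omega),
    mulQJ F H (by omega) (by omega) (by omega) (by omega)]

end NrskSim

/-- For `n ≥ 2`, `2 ≤ k ≤ n` and `1 ≤ r < s ≤ n` with `s + k - 2 ≤ n`, the matrix
`N_{r,s,k} ∈ Mₙ(F)` is similar (conjugate by an invertible matrix) to the matrix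
`N = ∑_{i=1}^{k-1} E_{i+1,i}`, a single nilpotent Jordan block of size `k` together
with `n - k` zero blocks of size `1`. -/
theorem Nrsk_similar_singleJordanBlock
    (F : Type*) [Field F] (n k r s : ℕ) (hn : 2 ≤ n) (hk : 2 ≤ k) (hkn : k ≤ n)
    (hr : 1 ≤ r) (hrs : r < s) (hsn : s ≤ n) (hskn : s + k - 2 ≤ n) :
    ∃ P : (Matrix (Fin n) (Fin n) F)ˣ,
      Nrsk F n r s k = (↑P⁻¹ : Matrix (Fin n) (Fin n) F) * singleJordanBlock F n k * (↑P : Matrix (Fin n) (Fin n) F) := by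
  have H : NrskSim.Hyp n r s k := ⟨hr, hrs, hsn, hk, hkn, hskn⟩
  have hQR := NrskSim.QR_one F H
  have hRQ := NrskSim.RQ_one F H
  have hNQ := NrskSim.NQ_eq_QJ F H
  refine ⟨⟨NrskSim.Rmat F n r s k, NrskSim.Qmat F n r s k, hRQ, hQR⟩, ?_⟩
  show Nrsk F n r s k =
    NrskSim.Qmat F n r s k * singleJordanBlock F n k * NrskSim.Rmat F n r s k
  calc Nrsk F n r s k = Nrsk F n r s k * (NrskSim.Qmat F n r s k * NrskSim.Rmat F n r s k) := by
        rw [hQR, mul_one]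
    _ = Nrsk F n r s k * NrskSim.Qmat F n r s k * NrskSim.Rmat F n r s k := by
        rw [mul_assoc]
    _ = NrskSim.Qmat F n r s k * singleJordanBlock F n k * NrskSim.Rmat F n r s k := by
        rw [hNQ]
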